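/- Let P be a closed convex cone in ℝ^d that is spanning (P − P = ℝ^d) and pointed (P ∩ (−P) = {0}). Let Q ⊆ ℝ^d be a closed set with Q ≠ ℝ^d, −P ⊆ Q, Q + Q ⊆ Q, and Q ∪ (−Q) = ℝ^d. Then there exists a unique λ ∈ ℝ^d with ‖λ‖ = 1 and ⟨λ|x⟩ ≥ 0 for all x ∈ P such that Q = {y ∈ ℝ^d : ⟨λ|y⟩ ≤ 0}. -/

import Mathlib

open Pointwise

/-- Let `P` be a closed convex cone in `ℝ^d` that is spanning and
pointed. Let `Q ⊆ ℝ^d` be a closed set with `Q ≠ ℝ^d`, `-P ⊆ Q`, `Q + Q ⊆ Q`, and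
`Q ∪ (-Q) = ℝ^d`. Then there exists a unique `l ∈ ℝ^d` with `‖l‖ = 1` and `⟨l|x⟩ ≥ 0`
for all `x ∈ P` such that `Q = {y : ⟨l|y⟩ ≤ 0}`. -/
theorem stmt_1 {d : ℕ}
    (P : Set (EuclideanSpace ℝ (Fin d)))
    (hPclosed : IsClosed P) (hPconvex : Convex ℝ P)
    (hPcone : ∀ (c : ℝ), 0 ≤ c → ∀ x ∈ P, c • x ∈ P)
    (hPspan : P - P = Set.univ)
    (hPpointed : P ∩ (-P) = {0})
    (Q : Set (EuclideanSpace ℝ (Fin d)))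
    (hQclosed : IsClosed Q) (hQnuniv : Q ≠ Set.univ)
    (hPQ : -P ⊆ Q) (hQadd : Q + Q ⊆ Q) (hQtot : Q ∪ (-Q) = Set.univ) :
    ∃! l : EuclideanSpace ℝ (Fin d),
      ‖l‖ = 1 ∧ (∀ x ∈ P, 0 ≤ (inner ℝ l x : ℝ)) ∧
      Q = {y | (inner ℝ l y : ℝ) ≤ 0} := by
  -- 0 ∈ P, hence 0 ∈ Q
  have hPne : P.Nonempty := by
    by_contra h
    rw [Set.not_nonempty_iff_eq_empty] at h
    rw [h] at hPspan
    simp [Set.sub_eq_empty] at hPspan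
    exact Set.empty_ne_univ hPspan
  obtain ⟨x₀, hx₀⟩ := hPne
  have hP0 : (0 : EuclideanSpace ℝ (Fin d)) ∈ P := by simpa using hPcone 0 le_rfl x₀ hx₀
  have hQ0 : (0 : EuclideanSpace ℝ (Fin d)) ∈ Q := hPQ (by simpa using hP0)
  have hadd : ∀ x ∈ Q, ∀ y ∈ Q, x + y ∈ Q := fun x hx y hy => hQadd (Set.add_mem_add hx hy)
  have hcov : ∀ y : EuclideanSpace ℝ (Fin d), y ∉ Q → -y ∈ Q := by
    intro y hy
    have := Set.mem_univ y
    rw [← hQtot] at this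
    rcases this with h | h
    · exact absurd h hy
    · simpa using h
  -- midpoint closure
  have hmid : ∀ x ∈ Q, ∀ y ∈ Q, (2⁻¹ : ℝ) • (x + y) ∈ Q := by
    intro x hx y hy
    by_contra hm
    have hz : -((2⁻¹ : ℝ) • (x + y)) ∈ Q := hcov _ hm
    have hw : (2⁻¹ : ℝ) • (x - y) ∈ Q := by
      have h := hadd _ hz _ hx
      have : -((2⁻¹ : ℝ) • (x + y)) + x = (2⁻¹ : ℝ) • (x - y) := by
        module
      rwa [this] at h
    have h2 : y + (2⁻¹ : ℝ) • (x - y) = (2⁻¹ : ℝ) • (x + y) := by module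
    have := hadd _ hy _ hw
    rw [h2] at this
    exact hm this
  -- closure under nonnegative scalar multiplication
  have hsmul : ∀ (r : ℝ), 0 ≤ r → ∀ x ∈ Q, r • x ∈ Q := by
    intro r hr x hx
    set S : Set ℝ := {s : ℝ | s • x ∈ Q} with hS
    have hSclosed : IsClosed S := hQclosed.preimage (continuous_id.smul continuous_const)
    have hS0 : (0 : ℝ) ∈ S := by simp [hS, hQ0]
    have hS1 : (1 : ℝ) ∈ S := by simp [hS, hx]
    have hSadd : ∀ s ∈ S, ∀ t ∈ S, s + t ∈ S := by
      intro s hs t ht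
      have := hadd _ hs _ ht
      simpa [hS, add_smul] using this
    have hShalf : ∀ s ∈ S, s / 2 ∈ S := by
      intro s hs
      have := hmid _ hQ0 _ hs
      have h2 : (2⁻¹ : ℝ) • ((0 : EuclideanSpace ℝ (Fin d)) + s • x) = (s / 2) • x := by
        rw [zero_add, smul_smul]; ring_nf
      rwa [h2] at this
    have hSpow : ∀ k : ℕ, ((2 : ℝ) ^ k)⁻¹ ∈ S := by
      intro k
      induction k with
      | zero => simpa using hS1
      | succ n ih =>
        have := hShalf _ ih
        have h2 : ((2 : ℝ) ^ n)⁻¹ / 2 = ((2 : ℝ) ^ (n + 1))⁻¹ := by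
          rw [pow_succ]; field_simp
        rwa [h2] at this
    have hSnat : ∀ (m : ℕ), ∀ s ∈ S, (m : ℝ) * s ∈ S := by
      intro m
      induction m with
      | zero => intro s _; simpa using hS0
      | succ n ih =>
        intro s hs
        have h := hSadd _ (ih s hs) _ hs
        have he : ((n : ℝ) + 1) * s = (n : ℝ) * s + s := by ring
        push_cast
        rw [he]
        exact h
    -- r is in the closure of S
    have hrS : r ∈ closure S := by
      rw [Metric.mem_closure_iff]
      intro ε hε
      obtain ⟨k, hk⟩ := pow_unbounded_of_one_lt ε⁻¹ (by norm_num : (1 : ℝ) < 2)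
      refine ⟨(⌈r * 2 ^ k⌉₊ : ℝ) * ((2 : ℝ) ^ k)⁻¹, hSnat _ _ (hSpow k), ?_⟩
      have hpow : (0 : ℝ) < 2 ^ k := by positivity
      have h1 : r * 2 ^ k ≤ (⌈r * 2 ^ k⌉₊ : ℝ) := Nat.le_ceil _
      have h2 : (⌈r * 2 ^ k⌉₊ : ℝ) < r * 2 ^ k + 1 :=
        Nat.ceil_lt_add_one (by positivity)
      rw [Real.dist_eq, abs_sub_lt_iff]
      constructor
      · calc r - (⌈r * 2 ^ k⌉₊ : ℝ) * ((2 : ℝ) ^ k)⁻¹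
            ≤ r - (r * 2 ^ k) * ((2 : ℝ) ^ k)⁻¹ := by
              have := mul_le_mul_of_nonneg_right h1 (le_of_lt (inv_pos.mpr hpow))
              linarith
          _ = 0 := by field_simp; ring
          _ < ε := hε
      · have : (⌈r * 2 ^ k⌉₊ : ℝ) * ((2 : ℝ) ^ k)⁻¹ < (r * 2 ^ k + 1) * ((2 : ℝ) ^ k)⁻¹ :=
          mul_lt_mul_of_pos_right h2 (inv_pos.mpr hpow)
        have heq : (r * 2 ^ k + 1) * ((2 : ℝ) ^ k)⁻¹ = r + ((2 : ℝ) ^ k)⁻¹ := by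
          field_simp
        have hkk : ((2 : ℝ) ^ k)⁻¹ < ε := by
          rw [inv_lt_comm₀ hpow hε]
          exact hk
        rw [heq] at this
        linarith
    rwa [hSclosed.closure_eq] at hrS
  -- Q is convex
  have hconv : Convex ℝ Q := by
    intro x hx y hy a b ha hb _
    exact hadd _ (hsmul a ha x hx) _ (hsmul b hb y hy)
  -- a point outside Q
  have hpex : ∃ p : EuclideanSpace ℝ (Fin d), p ∉ Q := by
    by_contra h
    push_neg at h
    exact hQnuniv (Set.eq_univ_of_forall h)
  obtain ⟨p, hp⟩ := hpex
  obtain ⟨f, u, hf, hu⟩ := geometric_hahn_banach_closed_point hconv hQclosed hp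
  have hu0 : (0 : ℝ) < u := by simpa using hf 0 hQ0
  -- f is nonpositive on Q
  have hfQ : ∀ q ∈ Q, f q ≤ 0 := by
    intro q hq
    by_contra h
    push_neg at h
    have ht : (0 : ℝ) ≤ u / f q := le_of_lt (div_pos hu0 h)
    have := hf _ (hsmul (u / f q) ht q hq)
    rw [map_smul, smul_eq_mul, div_mul_cancel₀ _ (ne_of_gt h)] at this
    exact lt_irrefl u this
  -- translate f to an inner product
  set l : EuclideanSpace ℝ (Fin d) := (InnerProductSpace.toDual ℝ (EuclideanSpace ℝ (Fin d))).symm f with hl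
  have hinner : ∀ y : EuclideanSpace ℝ (Fin d), (inner ℝ l y : ℝ) = f y := fun y =>
    InnerProductSpace.toDual_symm_apply
  have hlne : l ≠ 0 := by
    intro h
    have : f p = 0 := by rw [← hinner, h, inner_zero_left]
    linarith [hu]
  have hlnorm : (0 : ℝ) < ‖l‖ := norm_pos_iff.mpr hlne
  -- Q = {y | f y ≤ 0}
  have hQeq : Q = {y : EuclideanSpace ℝ (Fin d) | f y ≤ 0} := by
    apply Set.Subset.antisymm
    · intro q hq; exact hfQ q hq
    · intro y hy
      by_contra hyQ
      obtain ⟨ε, hε, hball⟩ := Metric.isOpen_iff.mp hQclosed.isOpen_compl y hyQ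
      set δ : ℝ := ε / (2 * ‖l‖) with hδ
      have hδpos : 0 < δ := by positivity
      have hmem : y - δ • l ∈ Metric.ball y ε := by
        rw [Metric.mem_ball, dist_eq_norm]
        have h0 : y - δ • l - y = -(δ • l) := by module
        rw [h0, norm_neg, norm_smul, Real.norm_eq_abs, abs_of_pos hδpos, hδ]
        rw [div_mul_eq_mul_div, mul_comm (2 : ℝ) ‖l‖, ← div_div]
        rw [mul_div_assoc, div_self (ne_of_gt hlnorm)]
        linarith
      have hnot : y - δ • l ∉ Q := hball hmem
      have : -(y - δ • l) ∈ Q := hcov _ hnot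
      have hle := hfQ _ this
      rw [map_neg, map_sub, map_smul, smul_eq_mul] at hle
      have hfl : f l = ‖l‖ ^ 2 := by rw [← hinner, real_inner_self_eq_norm_sq]
      rw [hfl] at hle
      have hy0 : f y ≤ 0 := hy
      nlinarith [mul_pos hδpos (pow_pos hlnorm 2)]
  -- the normalized functional
  refine ⟨‖l‖⁻¹ • l, ⟨?_, ?_, ?_⟩, ?_⟩
  · rw [norm_smul, Real.norm_eq_abs, abs_of_pos (inv_pos.mpr hlnorm),
      inv_mul_cancel₀ (ne_of_gt hlnorm)]
  · intro x hx
    have hmQ : -x ∈ Q := hPQ (by simpa using hx)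
    have := hfQ _ hmQ
    rw [map_neg] at this
    rw [real_inner_smul_left, hinner]
    have : 0 ≤ f x := by linarith
    positivity
  · rw [hQeq]
    ext y
    simp only [Set.mem_setOf_eq, real_inner_smul_left, hinner]
    constructor
    · intro h
      exact mul_nonpos_of_nonneg_of_nonpos (le_of_lt (inv_pos.mpr hlnorm)) h
    · intro h
      by_contra hc
      push_neg at hc
      nlinarith [inv_pos.mpr hlnorm]
  · -- uniqueness
    intro l' ⟨hn', _, hQ'⟩
    set l₀ : EuclideanSpace ℝ (Fin d) := ‖l‖⁻¹ • l with hl₀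
    have hn₀ : ‖l₀‖ = 1 := by
      rw [hl₀, norm_smul, Real.norm_eq_abs, abs_of_pos (inv_pos.mpr hlnorm),
        inv_mul_cancel₀ (ne_of_gt hlnorm)]
    have hQ₀ : Q = {y : EuclideanSpace ℝ (Fin d) | (inner ℝ l₀ y : ℝ) ≤ 0} := by
      rw [hQeq]
      ext y
      simp only [Set.mem_setOf_eq, hl₀, real_inner_smul_left, hinner]
      constructor
      · intro h
        exact mul_nonpos_of_nonneg_of_nonpos (le_of_lt (inv_pos.mpr hlnorm)) h
      · intro h
        by_contra hc
        push_neg at hc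
        nlinarith [inv_pos.mpr hlnorm]
    have hiff : ∀ y : EuclideanSpace ℝ (Fin d), (inner ℝ l' y : ℝ) ≤ 0 ↔ (inner ℝ l₀ y : ℝ) ≤ 0 := by
      intro y
      exact Set.ext_iff.mp (hQ'.symm.trans hQ₀) y
    have himp : ∀ y : EuclideanSpace ℝ (Fin d), (inner ℝ l₀ y : ℝ) = 0 → (inner ℝ l' y : ℝ) = 0 := by
      intro y hy
      have h1 : (inner ℝ l' y : ℝ) ≤ 0 := (hiff y).mpr (le_of_eq hy)
      have h2 : (inner ℝ l' (-y) : ℝ) ≤ 0 := (hiff (-y)).mpr (by rw [inner_neg_right]; linarith)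
      rw [inner_neg_right] at h2
      linarith
    set c : ℝ := inner ℝ l₀ l' with hc
    have hcy : (inner ℝ l₀ (l' - c • l₀) : ℝ) = 0 := by
      rw [inner_sub_right, real_inner_smul_right, real_inner_self_eq_norm_sq, hn₀]
      ring
    have hc2 : (inner ℝ l' (l' - c • l₀) : ℝ) = 0 := himp _ hcy
    rw [inner_sub_right, real_inner_smul_right, real_inner_self_eq_norm_sq, hn'] at hc2
    have hcsym : (inner ℝ l' l₀ : ℝ) = c := by rw [hc, real_inner_comm]
    rw [hcsym] at hc2
    -- c^2 = 1
    have hcsq : c ^ 2 = 1 := by nlinarith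
    -- c ≥ 0
    have hcpos : 0 ≤ c := by
      have h1 : (inner ℝ l₀ (-l₀) : ℝ) ≤ 0 := by
        rw [inner_neg_right, real_inner_self_eq_norm_sq, hn₀]; norm_num
      have h2 : (inner ℝ l' (-l₀) : ℝ) ≤ 0 := (hiff (-l₀)).mpr h1
      rw [inner_neg_right, hcsym] at h2
      linarith
    have hc1 : c = 1 := by nlinarith
    have : (inner ℝ l₀ l' : ℝ) = 1 := by rw [← hc, hc1]
    exact (inner_eq_one_iff_of_norm_eq_one hn' hn₀).mp (by rw [real_inner_comm]; exact this)
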